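/- Let G be a finite simple graph with connected components G₁, ..., G_m, all with vertices in ℕ. Then the independence complex Δ(G) is sortable if and only if each Δ(G_r) is sortable. -/

import Mathlib

/-- The first component of the sorting `sort(F,G)`: the elements at odd
positions (1-indexed) of the weakly increasing list of the multiset union of `F` and `G`. -/
def sortFst (F G : Finset ℕ) : Finset ℕ :=
  ((((F.val + G.val).sort (· ≤ ·)).zipIdx.filter (fun p => p.2 % 2 = 0)).map Prod.fst).toFinset

/-- The second component of the sorting `sort(F,G)`: the elements at even
positions (1-indexed). -/
def sortSnd (F G : Finset ℕ) : Finset ℕ :=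
  ((((F.val + G.val).sort (· ≤ ·)).zipIdx.filter (fun p => p.2 % 2 = 1)).map Prod.fst).toFinset

def SortableWrt (Δ : Set (Finset ℕ)) : Prop :=
  ∀ F ∈ Δ, ∀ G ∈ Δ, sortFst F G ∈ Δ ∧ sortSnd F G ∈ Δ

/-- Sortable with respect to some (injective) relabeling of the vertices. -/
def Sortable (Δ : Set (Finset ℕ)) : Prop :=
  ∃ f : ℕ → ℕ, Function.Injective f ∧ SortableWrt {F | ∃ H ∈ Δ, F = H.image f}

def IsIndep (G : SimpleGraph ℕ) (F : Finset ℕ) : Prop :=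
  ∀ a ∈ F, ∀ b ∈ F, ¬ G.Adj a b

/-- The independence complex of `G` with vertex set `V`. -/
def indepComplex (G : SimpleGraph ℕ) (V : Finset ℕ) : Set (Finset ℕ) :=
  {F | F ⊆ V ∧ IsIndep G F}

/-- A finite simple graph `G` with vertex set `⋃ r, V r`, whose connected components
are the induced subgraphs on the blocks `V r`:  the blocks are pairwise disjoint,
every edge of `G` lies inside a block, and each block is pairwise reachable. -/
def pick : Bool → List ℕ → List ℕ
  | _, [] => []
  | true, a :: l => a :: pick false l
  | false, _ :: l => pick true l

lemma enumFrom_filter_even (l : List ℕ) : ∀ n : ℕ,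
    (((List.zipIdx l n).filter (fun p => p.2 % 2 = 0)).map Prod.fst)
      = pick (n % 2 = 0) l := by
  induction l with
  | nil => intro n; simp [pick]
  | cons a l ih =>
    intro n
    rcases Nat.even_or_odd n with h | h
    · have h0 : n % 2 = 0 := Nat.even_iff.mp h
      have h1 : (n+1) % 2 = 1 := by omega
      simp [List.zipIdx_cons, List.filter, h0, ih, h1, pick]
    · have h0 : n % 2 = 1 := Nat.odd_iff.mp h
      have h1 : (n+1) % 2 = 0 := by omega
      simp [List.zipIdx_cons, List.filter, h0, ih, h1, pick]

lemma enumFrom_filter_odd (l : List ℕ) : ∀ n : ℕ,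
    (((List.zipIdx l n).filter (fun p => p.2 % 2 = 1)).map Prod.fst)
      = pick (n % 2 = 1) l := by
  induction l with
  | nil => intro n; simp [pick]
  | cons a l ih =>
    intro n
    rcases Nat.even_or_odd n with h | h
    · have h0 : n % 2 = 0 := Nat.even_iff.mp h
      have h1 : (n+1) % 2 = 1 := by omega
      simp [List.zipIdx_cons, List.filter, h0, ih, h1, pick]
    · have h0 : n % 2 = 1 := Nat.odd_iff.mp h
      have h1 : (n+1) % 2 = 0 := by omega
      simp [List.zipIdx_cons, List.filter, h0, ih, h1, pick]

lemma sortFst_eq (F G : Finset ℕ) :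
    sortFst F G = (pick true ((F.val + G.val).sort (· ≤ ·))).toFinset := by
  have := enumFrom_filter_even ((F.val + G.val).sort (· ≤ ·)) 0
  simp only [sortFst]
  rw [this]
  norm_num

lemma sortSnd_eq (F G : Finset ℕ) :
    sortSnd F G = (pick false ((F.val + G.val).sort (· ≤ ·))).toFinset := by
  have := enumFrom_filter_odd ((F.val + G.val).sort (· ≤ ·)) 0
  simp only [sortSnd]
  rw [this]
  norm_num

lemma mem_pick {a : ℕ} : ∀ {b : Bool} {l : List ℕ}, a ∈ pick b l → a ∈ l := by
  intro b l
  induction l generalizing b with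
  | nil => simp [pick]
  | cons c l ih =>
    cases b with
    | true =>
      intro h
      rcases List.mem_cons.mp h with h | h
      · simp [h]
      · exact List.mem_cons_of_mem _ (ih h)
    | false => intro h; exact List.mem_cons_of_mem _ (ih h)

lemma pick_append (l l' : List ℕ) : ∀ b : Bool,
    pick b (l ++ l') = pick b l ++ pick (if l.length % 2 = 0 then b else !b) l' := by
  induction l with
  | nil => intro b; simp [pick]
  | cons a l ih =>
    intro b
    have hc1 : (if (a::l).length % 2 = 0 then true else false)
        = (if l.length % 2 = 0 then false else true) := by
      simp only [List.length_cons]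
      by_cases h : l.length % 2 = 0
      · have h2 : ¬ (l.length+1) % 2 = 0 := by omega
        simp [h, h2]
      · have h2 : (l.length+1) % 2 = 0 := by omega
        simp [h, h2]
    have hc2 : (if (a::l).length % 2 = 0 then false else true)
        = (if l.length % 2 = 0 then true else false) := by
      simp only [List.length_cons]
      by_cases h : l.length % 2 = 0
      · have h2 : ¬ (l.length+1) % 2 = 0 := by omega
        simp [h, h2]
      · have h2 : (l.length+1) % 2 = 0 := by omega
        simp [h, h2]
    cases b with
    | true =>
      simp only [List.cons_append, List.append_eq, pick, ih false, hc1, Bool.not_true, Bool.not_false]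
    | false =>
      simp only [List.cons_append, List.append_eq, pick, ih true, hc2, Bool.not_true, Bool.not_false]

lemma pick_map {φ : ℕ → ℕ} : ∀ (b : Bool) (l : List ℕ),
    pick b (l.map φ) = (pick b l).map φ := by
  intro b l
  induction l generalizing b with
  | nil => simp [pick]
  | cons a l ih => cases b <;> simp [pick, ih]

lemma sort_add (s t : Multiset ℕ) (h : ∀ a ∈ s, ∀ b ∈ t, a ≤ b) :
    (s + t).sort (· ≤ ·) = s.sort (· ≤ ·) ++ t.sort (· ≤ ·) := by
  refine (fun hp hs => List.Perm.eq_of_pairwise' (Multiset.pairwise_sort _ _) hs hp) ?_ ?_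
  · apply Multiset.coe_eq_coe.mp
    rw [Multiset.sort_eq, ← Multiset.coe_add, Multiset.sort_eq, Multiset.sort_eq]
  · rw [List.pairwise_append]
    refine ⟨Multiset.pairwise_sort _ _, Multiset.pairwise_sort _ _, fun a ha b hb => ?_⟩
    exact h a (by rwa [← Multiset.mem_sort (· ≤ ·)]) b (by rwa [← Multiset.mem_sort (· ≤ ·)])

lemma sort_map {φ : ℕ → ℕ} (hφ : StrictMono φ) (s : Multiset ℕ) :
    (s.map φ).sort (· ≤ ·) = (s.sort (· ≤ ·)).map φ := by
  refine (fun hp hs => List.Perm.eq_of_pairwise' (Multiset.pairwise_sort _ _) hs hp) ?_ ?_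
  · have h1 : ((s.map φ).sort (· ≤ ·) : Multiset ℕ) = s.map φ := Multiset.sort_eq _ _
    have h2 : ((s.sort (· ≤ ·)).map φ : Multiset ℕ) = s.map φ := by
      rw [← Multiset.map_coe, Multiset.sort_eq]
    exact Multiset.coe_eq_coe.mp (h1.trans h2.symm)
  · exact List.Pairwise.map φ (fun a b hab => hφ.monotone hab) (Multiset.pairwise_sort _ _)

lemma mem_list_sum {a : ℕ} : ∀ {L : List (Multiset ℕ)}, a ∈ L.sum ↔ ∃ s ∈ L, a ∈ s := by
  intro L
  induction L with
  | nil => simp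
  | cons s L ih => simp [Multiset.mem_add, ih]

lemma pick_flatten : ∀ (L : List (Multiset ℕ)),
    L.Pairwise (fun s t => ∀ a ∈ s, ∀ b ∈ t, a ≤ b) → ∀ b : Bool,
    ∃ e : List (List ℕ),
      List.Forall₂ (fun c s => c = pick true (s.sort (· ≤ ·)) ∨ c = pick false (s.sort (· ≤ ·)))
        e L ∧
      pick b (L.sum.sort (· ≤ ·)) = e.flatten := by
  intro L
  induction L with
  | nil =>
    intro _ b
    refine ⟨[], List.Forall₂.nil, ?_⟩
    cases b <;> simp [Multiset.sort_zero, pick]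
  | cons s L ih =>
    intro hpw b
    have hrel : ∀ a ∈ s, ∀ x ∈ L.sum, a ≤ x := by
      intro a ha x hx
      obtain ⟨t, htL, hxt⟩ := mem_list_sum.mp hx
      exact (List.pairwise_cons.mp hpw).1 t htL a ha x hxt
    obtain ⟨e, he, hpe⟩ := ih (List.pairwise_cons.mp hpw).2
      (if (s.sort (· ≤ ·)).length % 2 = 0 then b else !b)
    refine ⟨pick b (s.sort (· ≤ ·)) :: e, List.Forall₂.cons ?_ he, ?_⟩
    · cases b
      · right; rfl
      · left; rfl
    · rw [List.sum_cons, sort_add s L.sum hrel, pick_append, hpe, List.flatten_cons]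

lemma sortFst_image {ψ : ℕ → ℕ} (hψ : StrictMono ψ) (F G : Finset ℕ) :
    sortFst (F.image ψ) (G.image ψ) = (sortFst F G).image ψ := by
  rw [sortFst_eq, sortFst_eq,
    Finset.image_val_of_injOn (hψ.injective.injOn),
    Finset.image_val_of_injOn (hψ.injective.injOn), ← Multiset.map_add,
    sort_map hψ, pick_map]
  ext a
  simp [Finset.mem_image]

lemma sortSnd_image {ψ : ℕ → ℕ} (hψ : StrictMono ψ) (F G : Finset ℕ) :
    sortSnd (F.image ψ) (G.image ψ) = (sortSnd F G).image ψ := by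
  rw [sortSnd_eq, sortSnd_eq,
    Finset.image_val_of_injOn (hψ.injective.injOn),
    Finset.image_val_of_injOn (hψ.injective.injOn), ← Multiset.map_add,
    sort_map hψ, pick_map]
  ext a
  simp [Finset.mem_image]

lemma sortableWrt_image {Δ : Set (Finset ℕ)} (h : SortableWrt Δ) {ψ : ℕ → ℕ}
    (hψ : StrictMono ψ) : SortableWrt {A | ∃ B ∈ Δ, A = B.image ψ} := by
  rintro _ ⟨F, hF, rfl⟩ _ ⟨G, hG, rfl⟩
  exact ⟨⟨sortFst F G, (h F hF G hG).1, sortFst_image hψ F G⟩,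
    ⟨sortSnd F G, (h F hF G hG).2, sortSnd_image hψ F G⟩⟩

lemma sortFst_subset (F G : Finset ℕ) : sortFst F G ⊆ F ∪ G := by
  intro a ha
  rw [sortFst_eq, List.mem_toFinset] at ha
  have := Multiset.mem_sort (α := ℕ) (· ≤ ·) |>.mp (mem_pick ha)
  rw [Multiset.mem_add] at this
  rcases this with h | h
  · exact Finset.mem_union_left _ h
  · exact Finset.mem_union_right _ h

lemma sortSnd_subset (F G : Finset ℕ) : sortSnd F G ⊆ F ∪ G := by
  intro a ha
  rw [sortSnd_eq, List.mem_toFinset] at ha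
  have := Multiset.mem_sort (α := ℕ) (· ≤ ·) |>.mp (mem_pick ha)
  rw [Multiset.mem_add] at this
  rcases this with h | h
  · exact Finset.mem_union_left _ h
  · exact Finset.mem_union_right _ h

lemma val_sum {m : ℕ} (V : Fin m → Finset ℕ)
    (hdisj : ∀ r s : Fin m, r ≠ s → Disjoint (V r) (V s)) (H : Finset ℕ)
    (hH : H ⊆ Finset.univ.biUnion V) : H.val = ∑ r, (H ∩ V r).val := by
  classical
  ext a
  rw [Multiset.count_sum']
  by_cases ha : a ∈ H
  · obtain ⟨r₀, _, hr₀⟩ := Finset.mem_biUnion.mp (hH ha)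
    rw [Multiset.count_eq_one_of_mem H.nodup ha]
    rw [Finset.sum_eq_single r₀]
    · exact (Multiset.count_eq_one_of_mem (H ∩ V r₀).nodup
        (Finset.mem_inter.mpr ⟨ha, hr₀⟩)).symm
    · intro s _ hs
      apply Multiset.count_eq_zero_of_notMem
      intro hmem
      exact Finset.disjoint_left.mp (hdisj s r₀ hs) (Finset.mem_inter.mp hmem).2 hr₀
    · intro h; exact absurd (Finset.mem_univ r₀) h
  · rw [Multiset.count_eq_zero_of_notMem (by simpa using ha)]
    symm
    apply Finset.sum_eq_zero
    intro s _
    exact Multiset.count_eq_zero_of_notMem (fun hmem => ha (Finset.mem_inter.mp hmem).1)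

lemma map_val_sum {m : ℕ} (f : ℕ → ℕ) (s : Fin m → Multiset ℕ) :
    (∑ r, s r).map f = ∑ r, (s r).map f :=
  map_sum (Multiset.mapAddMonoidHom f) s Finset.univ

theorem stmt_8 (G : SimpleGraph ℕ) (m : ℕ) (V : Fin m → Finset ℕ)
    (hdisj : ∀ r s : Fin m, r ≠ s → Disjoint (V r) (V s))
    (hedge : ∀ a b, G.Adj a b → ∃ r, a ∈ V r ∧ b ∈ V r)
    (hconn : ∀ r, ∀ a ∈ V r, ∀ b ∈ V r, G.Reachable a b) :
    Sortable (indepComplex G (Finset.univ.biUnion V)) ↔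
      ∀ r, Sortable (indepComplex G (V r)) := by
  classical
  constructor
  · rintro ⟨f, hinj, hs⟩ r
    refine ⟨f, hinj, ?_⟩
    rintro _ ⟨H₁, hH₁, rfl⟩ _ ⟨H₂, hH₂, rfl⟩
    have hsub : V r ⊆ Finset.univ.biUnion V :=
      Finset.subset_biUnion_of_mem V (Finset.mem_univ r)
    have e₁ : H₁.image f ∈
        {F | ∃ H ∈ indepComplex G (Finset.univ.biUnion V), F = H.image f} :=
      ⟨H₁, ⟨hH₁.1.trans hsub, hH₁.2⟩, rfl⟩
    have e₂ : H₂.image f ∈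
        {F | ∃ H ∈ indepComplex G (Finset.univ.biUnion V), F = H.image f} :=
      ⟨H₂, ⟨hH₂.1.trans hsub, hH₂.2⟩, rfl⟩
    obtain ⟨⟨K₁, hK₁, hK₁e⟩, K₂, hK₂, hK₂e⟩ := hs _ e₁ _ e₂
    have key : ∀ (K X : Finset ℕ), X = K.image f →
        X ⊆ H₁.image f ∪ H₂.image f → K ⊆ V r := by
      intro K X hX hXsub a ha
      have hmem : f a ∈ H₁.image f ∪ H₂.image f :=
        hXsub (hX ▸ Finset.mem_image_of_mem f ha)
      rw [Finset.mem_union] at hmem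
      rcases hmem with hm | hm
      · obtain ⟨b, hb, hba⟩ := Finset.mem_image.mp hm
        exact (hinj hba) ▸ hH₁.1 hb
      · obtain ⟨b, hb, hba⟩ := Finset.mem_image.mp hm
        exact (hinj hba) ▸ hH₂.1 hb
    constructor
    · exact ⟨K₁, ⟨key K₁ _ hK₁e (sortFst_subset _ _), hK₁.2⟩, hK₁e⟩
    · exact ⟨K₂, ⟨key K₂ _ hK₂e (sortSnd_subset _ _), hK₂.2⟩, hK₂e⟩
  · intro h
    choose g hginj hgs using h
    set B : ℕ := 1 + Finset.univ.sup (fun r => (V r).sup (g r)) with hBdef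
    have hgB : ∀ r, ∀ a ∈ V r, g r a < B := by
      intro r a ha
      have h1 : g r a ≤ (V r).sup (g r) := Finset.le_sup ha
      have h2 : (V r).sup (g r) ≤ Finset.univ.sup (fun r => (V r).sup (g r)) :=
        Finset.le_sup (f := fun r => (V r).sup (g r)) (Finset.mem_univ r)
      omega
    obtain ⟨f, hfdef⟩ : ∃ f : ℕ → ℕ, ∀ a,
        f a = if h : ∃ r, a ∈ V r then (h.choose : ℕ) * B + g h.choose a
          else m * B + a := ⟨_, fun _ => rfl⟩
    have hfmem : ∀ (r : Fin m), ∀ a ∈ V r, f a = (r : ℕ) * B + g r a := by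
      intro r a ha
      have hex : ∃ s, a ∈ V s := ⟨r, ha⟩
      have hc : hex.choose = r := by
        by_contra hne
        exact Finset.disjoint_left.mp (hdisj _ _ hne) hex.choose_spec ha
      rw [hfdef, dif_pos hex, hc]
    have hfblock : ∀ (r : Fin m), ∀ a ∈ V r,
        (r : ℕ) * B ≤ f a ∧ f a < ((r : ℕ) + 1) * B := by
      intro r a ha
      rw [hfmem r a ha, Nat.add_mul, one_mul]
      have := hgB r a ha
      omega
    have hftop : ∀ r : Fin m, ((r : ℕ) + 1) * B ≤ m * B :=
      fun r => Nat.mul_le_mul_right B r.isLt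
    have key : ∀ (r s : Fin m) (x y : ℕ), x < B → y < B →
        (r : ℕ) * B + x = (s : ℕ) * B + y → r = s ∧ x = y := by
      intro r s x y hx hy hxy
      have hrs : (r : ℕ) = s := by
        rcases Nat.lt_trichotomy (r : ℕ) (s : ℕ) with hlt | heq | hgt
        · exfalso
          have h1 : ((r : ℕ) + 1) * B ≤ (s : ℕ) * B := Nat.mul_le_mul_right B hlt
          rw [Nat.add_mul, one_mul] at h1
          omega
        · exact heq
        · exfalso
          have h1 : ((s : ℕ) + 1) * B ≤ (r : ℕ) * B := Nat.mul_le_mul_right B hgt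
          rw [Nat.add_mul, one_mul] at h1
          omega
      rw [hrs] at hxy
      exact ⟨Fin.ext hrs, by omega⟩
    have hinj : Function.Injective f := by
      intro a b hab
      by_cases ha : ∃ r, a ∈ V r <;> by_cases hb : ∃ s, b ∈ V s
      · obtain ⟨r, har⟩ := ha
        obtain ⟨s, hbs⟩ := hb
        rw [hfmem r a har, hfmem s b hbs] at hab
        obtain ⟨hrs, hxy⟩ := key r s _ _ (hgB r a har) (hgB s b hbs) hab
        subst hrs
        exact hginj r hxy
      · obtain ⟨r, har⟩ := ha
        rw [hfmem r a har, hfdef b, dif_neg hb] at hab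
        have h1 := hgB r a har
        have h2 := hftop r
        rw [Nat.add_mul, one_mul] at h2
        omega
      · obtain ⟨s, hbs⟩ := hb
        rw [hfmem s b hbs, hfdef a, dif_neg ha] at hab
        have h1 := hgB s b hbs
        have h2 := hftop s
        rw [Nat.add_mul, one_mul] at h2
        omega
      · rw [hfdef a, dif_neg ha, hfdef b, dif_neg hb] at hab
        omega
    refine ⟨f, hinj, ?_⟩
    rintro _ ⟨H₁, ⟨hH₁V, hH₁i⟩, rfl⟩ _ ⟨H₂, ⟨hH₂V, hH₂i⟩, rfl⟩
    have hindsub : ∀ (A C : Finset ℕ), A ⊆ C → IsIndep G C → IsIndep G A :=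
      fun A C hAC hC a ha b hb => hC a (hAC ha) b (hAC hb)
    set F₁ : Fin m → Finset ℕ := fun r => (H₁ ∩ V r).image f with hF₁
    set F₂ : Fin m → Finset ℕ := fun r => (H₂ ∩ V r).image f with hF₂
    set S : Fin m → Multiset ℕ := fun r => (F₁ r).val + (F₂ r).val with hS
    have hψ : ∀ r : Fin m, StrictMono (fun x => (r : ℕ) * B + x) :=
      fun r x y hxy => Nat.add_lt_add_left hxy _
    have himgr : ∀ (r : Fin m) (K : Finset ℕ), K ⊆ V r →
        K.image f = (K.image (g r)).image (fun x => (r : ℕ) * B + x) := by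
      intro r K hK
      rw [Finset.image_image]
      exact Finset.image_congr (fun a ha => by
        simp only [Function.comp_apply]
        rw [hfmem r a (hK ha)])
    have hΓr : ∀ r : Fin m,
        SortableWrt {A | ∃ K ∈ indepComplex G (V r), A = K.image f} := by
      intro r
      have h1 := sortableWrt_image (hgs r) (hψ r)
      have hset : {A | ∃ K ∈ indepComplex G (V r), A = K.image f}
          = {A | ∃ C ∈ {F | ∃ H ∈ indepComplex G (V r), F = H.image (g r)},
              A = C.image (fun x => (r : ℕ) * B + x)} := by
        ext A
        constructor
        · rintro ⟨K, hK, rfl⟩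
          exact ⟨K.image (g r), ⟨K, hK, rfl⟩, himgr r K hK.1⟩
        · rintro ⟨_, ⟨K, hK, rfl⟩, rfl⟩
          exact ⟨K, hK, (himgr r K hK.1).symm⟩
      rw [hset]
      exact h1
    have hsum : (H₁.image f).val + (H₂.image f).val = ∑ r, S r := by
      have h1 : (H₁.image f).val = ∑ r, (F₁ r).val := by
        rw [Finset.image_val_of_injOn hinj.injOn, val_sum V hdisj H₁ hH₁V, map_val_sum]
        exact Finset.sum_congr rfl
          (fun r _ => (Finset.image_val_of_injOn hinj.injOn).symm)
      have h2 : (H₂.image f).val = ∑ r, (F₂ r).val := by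
        rw [Finset.image_val_of_injOn hinj.injOn, val_sum V hdisj H₂ hH₂V, map_val_sum]
        exact Finset.sum_congr rfl
          (fun r _ => (Finset.image_val_of_injOn hinj.injOn).symm)
      rw [h1, h2, ← Finset.sum_add_distrib]
    have hblock : ∀ (r : Fin m), ∀ x ∈ S r,
        (r : ℕ) * B ≤ x ∧ x < ((r : ℕ) + 1) * B := by
      intro r x hx
      rcases Multiset.mem_add.mp hx with hx | hx
      · obtain ⟨a, ha, rfl⟩ := Finset.mem_image.mp (Finset.mem_val.mp hx)
        exact hfblock r a (Finset.mem_inter.mp ha).2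
      · obtain ⟨a, ha, rfl⟩ := Finset.mem_image.mp (Finset.mem_val.mp hx)
        exact hfblock r a (Finset.mem_inter.mp ha).2
    set L : List (Multiset ℕ) := (List.finRange m).map S with hL
    have hLsum : L.sum = ∑ r, S r := (Fin.sum_univ_def S).symm
    have hLlen : L.length = m := by simp [hL]
    have hpw : L.Pairwise (fun s t => ∀ a ∈ s, ∀ b ∈ t, a ≤ b) := by
      rw [hL, List.pairwise_map]
      apply List.Pairwise.imp ?_ (List.pairwise_lt_finRange m)
      intro r s hrs a ha b hb
      have h1 := (hblock r a ha).2
      have h2 := (hblock s b hb).1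
      have hrs' : (r : ℕ) < (s : ℕ) := hrs
      have h3 : ((r : ℕ) + 1) * B ≤ (s : ℕ) * B := Nat.mul_le_mul_right B hrs'
      omega
    have main : ∀ b : Bool,
        ∃ K, (K ⊆ Finset.univ.biUnion V ∧ IsIndep G K) ∧
          (pick b (((H₁.image f).val + (H₂.image f).val).sort (· ≤ ·))).toFinset
            = K.image f := by
      intro b
      obtain ⟨e, he, hpe⟩ := pick_flatten L hpw b
      have hlen : e.length = m := he.length_eq.trans hLlen
      have hpiece : ∀ i : Fin m, ∃ K, (K ⊆ V i ∧ IsIndep G K) ∧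
          (e.get ⟨(i : ℕ), by rw [hlen]; exact i.isLt⟩).toFinset = K.image f := by
        intro i
        have h2 := (List.forall₂_iff_get.mp he).2 (i : ℕ)
          (by rw [hlen]; exact i.isLt) (by rw [hLlen]; exact i.isLt)
        have hgetL : L.get ⟨(i : ℕ), by rw [hLlen]; exact i.isLt⟩ = S i := by
          simp [hL, List.get_eq_getElem, List.getElem_map, List.getElem_finRange]
        rw [hgetL] at h2
        have hF₁m : F₁ i ∈ {A | ∃ K ∈ indepComplex G (V i), A = K.image f} :=
          ⟨H₁ ∩ V i, ⟨Finset.inter_subset_right,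
            hindsub _ _ Finset.inter_subset_left hH₁i⟩, rfl⟩
        have hF₂m : F₂ i ∈ {A | ∃ K ∈ indepComplex G (V i), A = K.image f} :=
          ⟨H₂ ∩ V i, ⟨Finset.inter_subset_right,
            hindsub _ _ Finset.inter_subset_left hH₂i⟩, rfl⟩
        obtain ⟨hfst, hsnd⟩ := hΓr i (F₁ i) hF₁m (F₂ i) hF₂m
        rcases h2 with h2 | h2
        · obtain ⟨K, hK, hKe⟩ := hfst
          refine ⟨K, hK, ?_⟩
          rw [h2, ← sortFst_eq, hKe]
        · obtain ⟨K, hK, hKe⟩ := hsnd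
          refine ⟨K, hK, ?_⟩
          rw [h2, ← sortSnd_eq, hKe]
      choose K hK hKe using hpiece
      refine ⟨Finset.univ.biUnion K, ⟨?_, ?_⟩, ?_⟩
      · rw [Finset.biUnion_subset]
        intro r _
        exact (hK r).1.trans (Finset.subset_biUnion_of_mem V (Finset.mem_univ r))
      · intro a ha b' hb' hadj
        obtain ⟨r, har, hbr⟩ := hedge a b' hadj
        obtain ⟨s, _, has⟩ := Finset.mem_biUnion.mp ha
        obtain ⟨t, _, hbt⟩ := Finset.mem_biUnion.mp hb'
        have hsr : s = r := by
          by_contra hne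
          exact Finset.disjoint_left.mp (hdisj s r hne) ((hK s).1 has) har
        have htr : t = r := by
          by_contra hne
          exact Finset.disjoint_left.mp (hdisj t r hne) ((hK t).1 hbt) hbr
        exact (hK r).2 a (hsr ▸ has) b' (htr ▸ hbt) hadj
      · have hx1 : pick b (((H₁.image f).val + (H₂.image f).val).sort (· ≤ ·))
            = e.flatten := by
          rw [hsum, ← hLsum, hpe]
        ext x
        simp only [List.mem_toFinset, hx1, List.mem_flatten]
        constructor
        · rintro ⟨l, hl, hxl⟩
          obtain ⟨j, hj⟩ := List.mem_iff_get.mp hl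
          have hj' : (j : ℕ) < m := by
            have := j.isLt
            omega
          have hio : x ∈ (K ⟨j, hj'⟩).image f := by
            rw [← hKe ⟨j, hj'⟩, List.mem_toFinset]
            exact hj ▸ hxl
          obtain ⟨a, haK, rfl⟩ := Finset.mem_image.mp hio
          exact Finset.mem_image_of_mem f
            (Finset.mem_biUnion.mpr ⟨⟨j, hj'⟩, Finset.mem_univ _, haK⟩)
        · intro hx
          obtain ⟨a, haU, rfl⟩ := Finset.mem_image.mp hx
          obtain ⟨i, _, hai⟩ := Finset.mem_biUnion.mp haU
          refine ⟨e.get ⟨(i : ℕ), by omega⟩, e.get_mem _, ?_⟩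
          rw [← List.mem_toFinset, hKe i]
          exact Finset.mem_image_of_mem f hai
    constructor
    · obtain ⟨K, hK, hKe⟩ := main true
      exact ⟨K, hK, by rw [sortFst_eq]; exact hKe⟩
    · obtain ⟨K, hK, hKe⟩ := main false
      exact ⟨K, hK, by rw [sortSnd_eq]; exact hKe⟩
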